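/- Let ν₁, ν₂ : [−π, π] → ℝ be measurable functions with ν₁(ω) > 0, ν₂(ω) > 0 and ν₁(ω) + ν₂(ω) = 2 for almost every ω ∈ [−π, π], and let x₁, x₂, ρ > 0. Then (1/(2π))·∫_{−π}^{π} ln[ 1 + (ρ/2)·(x₁+x₂)·(ν₁(ω)+ν₂(ω)) + ρ²·x₁x₂·ν₁(ω)ν₂(ω) ] dω > ln(1 + ρ(x₁+x₂)). -/

import Mathlib

open MeasureTheory Real

/-- asynchronous space-time coding strictly increases the mutual
information over synchronous coding at every finite SNR, when the eigenvalue
functions `ν₁, ν₂` are positive with `ν₁ + ν₂ = 2` a.e. on `[-π, π]`. -/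
theorem stmt_16 (ν₁ ν₂ : ℝ → ℝ) (hm1 : Measurable ν₁) (hm2 : Measurable ν₂)
    (hae : ∀ᵐ ω ∂(volume.restrict (Set.Icc (-π) π)),
      0 < ν₁ ω ∧ 0 < ν₂ ω ∧ ν₁ ω + ν₂ ω = 2)
    (x₁ x₂ ρ : ℝ) (hx₁ : 0 < x₁) (hx₂ : 0 < x₂) (hρ : 0 < ρ) :
    Real.log (1 + ρ * (x₁ + x₂)) <
      (1 / (2 * π)) *
        ∫ ω in Set.Icc (-π) π,
          Real.log (1 + (ρ / 2) * (x₁ + x₂) * (ν₁ ω + ν₂ ω)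
            + ρ^2 * x₁ * x₂ * (ν₁ ω * ν₂ ω)) := by
  set s : Set ℝ := Set.Icc (-π) π with hs
  set μ := volume.restrict s with hμ
  set c : ℝ := Real.log (1 + ρ * (x₁ + x₂)) with hc
  set f : ℝ → ℝ := fun ω =>
      Real.log (1 + (ρ / 2) * (x₁ + x₂) * (ν₁ ω + ν₂ ω)
        + ρ^2 * x₁ * x₂ * (ν₁ ω * ν₂ ω)) with hf
  have hπ : (0:ℝ) < π := Real.pi_pos
  have hbase : (0:ℝ) < 1 + ρ * (x₁ + x₂) := by nlinarith
  have hM : ∀ᵐ ω ∂μ, c < f ω ∧ f ω ≤ Real.log (1 + ρ * (x₁ + x₂) + ρ^2 * x₁ * x₂) := by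
    filter_upwards [hae] with ω ⟨h1, h2, h3⟩
    have hnn : ν₁ ω * ν₂ ω ≤ 1 := by nlinarith [sq_nonneg (ν₁ ω - ν₂ ω)]
    have hpos : 0 < ν₁ ω * ν₂ ω := mul_pos h1 h2
    have hk : 0 < ρ ^ 2 * x₁ * x₂ := by positivity
    have hp1 : 0 < ρ ^ 2 * x₁ * x₂ * (ν₁ ω * ν₂ ω) := mul_pos hk hpos
    have hp2 : ρ ^ 2 * x₁ * x₂ * (ν₁ ω * ν₂ ω) ≤ ρ ^ 2 * x₁ * x₂ := by
      nlinarith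
    constructor
    · apply Real.log_lt_log hbase
      rw [h3]; nlinarith
    · apply Real.log_le_log (by rw [h3]; nlinarith)
      rw [h3]; nlinarith
  have hfm : Measurable f := by
    apply Real.measurable_log.comp
    fun_prop
  have hint : Integrable f μ := by
    apply Integrable.mono' (integrable_const
      (max |c| |Real.log (1 + ρ * (x₁ + x₂) + ρ^2 * x₁ * x₂)|))
    · exact hfm.aestronglyMeasurable
    · filter_upwards [hM] with ω ⟨h1, h2⟩
      rw [Real.norm_eq_abs, abs_le]
      constructor
      · calc -(max |c| _) ≤ -|c| := by simp
          _ ≤ c := neg_abs_le c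
          _ ≤ f ω := h1.le
      · exact h2.trans ((le_abs_self _).trans (le_max_right _ _))
  have hvs : volume s = ENNReal.ofReal (2 * π) := by
    rw [hs, Real.volume_Icc]; ring_nf
  have hg : 0 < ∫ ω, (f ω - c) ∂μ := by
    have hnn0 : (0 : ℝ → ℝ) ≤ᵐ[μ] (fun ω => f ω - c) := by
      filter_upwards [hM] with ω ⟨h1, _⟩
      simpa [sub_nonneg] using h1.le
    rw [MeasureTheory.integral_pos_iff_support_of_nonneg_ae hnn0
      (hint.sub (integrable_const c))]
    have h1 : ∀ᵐ ω ∂μ, ω ∈ Function.support (fun ω => f ω - c) := by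
      filter_upwards [hM] with ω ⟨h1, _⟩
      simp only [Function.support, Set.mem_setOf_eq, sub_ne_zero]
      exact h1.ne'
    have h2 : μ Set.univ ≤ μ (Function.support (fun ω => f ω - c)) :=
      measure_mono_ae (by filter_upwards [h1] with ω hω _ using hω)
    refine lt_of_lt_of_le ?_ h2
    rw [hμ, Measure.restrict_apply_univ, hvs]
    rw [ENNReal.ofReal_pos]
    positivity
  have hsub : ∫ ω, (f ω - c) ∂μ = (∫ ω, f ω ∂μ) - 2 * π * c := by
    rw [integral_sub hint (integrable_const c), integral_const, hμ,
      measureReal_def, Measure.restrict_apply_univ, hvs, ENNReal.toReal_ofReal (by positivity)]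
    simp only [smul_eq_mul]
  rw [hsub] at hg
  have h2π : (0:ℝ) < 2 * π := by positivity
  rw [hc] at *
  rw [div_mul_eq_mul_div, one_mul, lt_div_iff₀ h2π]
  nlinarith [hg]
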